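/- arXiv:2404.00410 — 3 statements merged into one kernel-verified Lean document; each statement's English description precedes it below -/
import Mathlib

section
/- For every integer n ≥ 20 and every integer m with (n+7)/2 ≤ m ≤ n−7 if n is odd, respectively (n+4)/2 ≤ m ≤ n−6 if n is even, there exists a partition p of n such that λ(p) = m. -/
/-- `λ(p) = (1/2)·Σ_{j=1}^k n_j·(n_j − 2j + 1)` for a finite sequence of naturals. -/
def transLam (L : List ℕ) : ℚ :=
  (∑ j ∈ Finset.range L.length,
    (L.getD j 0 : ℚ) * ((L.getD j 0 : ℚ) - 2 * ((j : ℚ) + 1) + 1)) / 2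

/-- A partition of `n`: a nonincreasing list of positive integers summing to `n`. -/
def IsPartitionOf (n : ℕ) (L : List ℕ) : Prop :=
  L.Pairwise (· ≥ ·) ∧ (∀ x ∈ L, 0 < x) ∧ L.sum = n

lemma transLam_append_singleton (M : List ℕ) (c : ℕ) :
    transLam (M ++ [c]) = transLam M + (c:ℚ)*((c:ℚ) - 2*(M.length:ℚ) - 1)/2 := by
  unfold transLam
  rw [List.length_append]
  simp only [List.length_singleton]
  rw [Finset.sum_range_succ]
  have h1 : ∀ j ∈ Finset.range M.length,
      ((M ++ [c]).getD j 0 : ℚ) * (((M ++ [c]).getD j 0 : ℚ) - 2*((j:ℚ)+1) + 1)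
      = (M.getD j 0 : ℚ) * ((M.getD j 0 : ℚ) - 2*((j:ℚ)+1) + 1) := by
    intro j hj
    rw [List.getD_append _ _ _ _ (Finset.mem_range.mp hj)]
  rw [Finset.sum_congr rfl h1]
  have h2 : (M ++ [c]).getD M.length 0 = c := by
    rw [List.getD_append_right _ _ _ _ le_rfl]
    simp
  rw [h2]
  ring

lemma transLam_append_replicate (M : List ℕ) (c t : ℕ) :
    transLam (M ++ List.replicate t c) =
      transLam M + (c:ℚ)*(t:ℚ)*((c:ℚ) - 2*(M.length:ℚ) - (t:ℚ))/2 := by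
  induction t with
  | zero => simp
  | succ t ih =>
      rw [List.replicate_succ', ← List.append_assoc, transLam_append_singleton, ih]
      simp only [List.length_append, List.length_replicate]
      push_cast
      ring

lemma transLam_pair (a b : ℕ) :
    transLam [a, b] = ((a:ℚ)*((a:ℚ)-1) + (b:ℚ)*((b:ℚ)-3))/2 := by
  simp [transLam, Finset.sum_range_succ]
  ring

lemma transLam_triple (a b c : ℕ) :
    transLam [a, b, c] = ((a:ℚ)*((a:ℚ)-1) + (b:ℚ)*((b:ℚ)-3) + (c:ℚ)*((c:ℚ)-5))/2 := by
  simp [transLam, Finset.sum_range_succ]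
  ring

lemma transLam_quad (a b c d : ℕ) :
    transLam [a, b, c, d] =
      ((a:ℚ)*((a:ℚ)-1) + (b:ℚ)*((b:ℚ)-3) + (c:ℚ)*((c:ℚ)-5) + (d:ℚ)*((d:ℚ)-7))/2 := by
  simp [transLam, Finset.sum_range_succ]
  ring

lemma pairwise_rep (c t : ℕ) : (List.replicate t c).Pairwise (· ≥ ·) := by
  induction t with
  | zero => simp
  | succ t ih =>
      rw [List.replicate_succ]
      exact List.Pairwise.cons (fun y hy => by rw [List.eq_of_mem_replicate hy]) ih

lemma sorted_append_replicate {L : List ℕ} (c t : ℕ) (h : L.Pairwise (· ≥ ·))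
    (h2 : ∀ x ∈ L, c ≤ x) : (L ++ List.replicate t c).Pairwise (· ≥ ·) := by
  rw [List.pairwise_append]
  refine ⟨h, pairwise_rep c t, ?_⟩
  intro x hx y hy
  rw [List.eq_of_mem_replicate hy]
  exact h2 x hx

theorem segment_S2_in_spectrum (n : ℕ) (hn : 20 ≤ n) (m : ℕ)
    (hodd : Odd n → n + 7 ≤ 2 * m ∧ m ≤ n - 7)
    (heven : Even n → n + 4 ≤ 2 * m ∧ m ≤ n - 6) :
    ∃ L : List ℕ, IsPartitionOf n L ∧ transLam L = (m : ℚ) := by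
  rcases Nat.even_or_odd n with he | ho
  · -- n even
    obtain ⟨hm1, hm2⟩ := heven he
    obtain ⟨k, hk⟩ := he
    obtain ⟨B, S, hn', hm', hB, hS⟩ :
        ∃ B S, n = 2*S+2*B+4 ∧ m = S+2*B+3 ∧ 1 ≤ B ∧ 5 ≤ S :=
      ⟨m - k - 1, n - m - 1, by omega, by omega, by omega, by omega⟩
    by_cases hc1 : B + 3 ≤ S
    · -- case E-a : list [B+q+4, B'+5, 3] with B = B'+1, S = B'+q+3
      obtain ⟨b, q, hb, hq, h1⟩ : ∃ b q, B = b+1 ∧ 1 ≤ q ∧ S = b+q+3 := ⟨B-1, S-B-2, by omega, by omega, by omega⟩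
      subst hb h1
      refine ⟨([b+q+4, b+5, 3] ++ List.replicate b 2) ++ List.replicate q 1, ⟨?_, ?_, ?_⟩, ?_⟩
      · refine sorted_append_replicate _ _ (sorted_append_replicate _ _ ?_ ?_) ?_
        · simp [List.pairwise_cons] <;> omega
        · intro x hx; simp at hx; omega
        · intro x hx; simp [List.mem_append, List.mem_replicate] at hx; omega
      · intro x hx; simp [List.mem_append, List.mem_replicate] at hx; omega
      · simp [List.sum_append, List.sum_replicate]; omega
      · rw [transLam_append_replicate, transLam_append_replicate, transLam_triple]
        simp only [List.length_append, List.length_replicate, List.length_cons,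
          List.length_nil]
        have hmq : (m:ℚ) = 3*(b:ℚ) + (q:ℚ) + 8 := by exact_mod_cast (by omega : m = 3*b+q+8)
        rw [hmq]; push_cast; ring
    · by_cases hc2 : S ≤ B
      · -- case E-b : [p+q+5, p+4, 3] ++ rep p 2 ++ rep q 1, S = p+2, B = p+q+2
        obtain ⟨p, q, h1, h2⟩ : ∃ p q, S = p+2 ∧ B = p+q+2 := ⟨S-2, B-S, by omega, by omega⟩
        subst h1 h2
        refine ⟨([p+q+5, p+4, 3] ++ List.replicate p 2) ++ List.replicate q 1, ⟨?_, ?_, ?_⟩, ?_⟩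
        · refine sorted_append_replicate _ _ (sorted_append_replicate _ _ ?_ ?_) ?_
          · simp [List.pairwise_cons] <;> omega
          · intro x hx; simp at hx; omega
          · intro x hx; simp [List.mem_append, List.mem_replicate] at hx; omega
        · intro x hx; simp [List.mem_append, List.mem_replicate] at hx; omega
        · simp [List.sum_append, List.sum_replicate]; omega
        · rw [transLam_append_replicate, transLam_append_replicate, transLam_triple]
          simp only [List.length_append, List.length_replicate, List.length_cons,
            List.length_nil]
          have hmq : (m:ℚ) = 3*(p:ℚ) + 2*(q:ℚ) + 9 := by
            exact_mod_cast (by omega : m = 3*p+2*q+9)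
          rw [hmq]; push_cast; ring
      · have hSB : S = B + 1 ∨ S = B + 2 := by omega
        rcases hSB with h1 | h1
        · -- case E-d : [r+7, r+5, 5, 4] ++ rep r 2 ++ [1], B = r+4
          obtain ⟨r, hr⟩ : ∃ r, B = r+4 := ⟨B-4, by omega⟩
          subst hr h1
          refine ⟨([r+7, r+5, 5, 4] ++ List.replicate r 2) ++ List.replicate 1 1,
            ⟨?_, ?_, ?_⟩, ?_⟩
          · refine sorted_append_replicate _ _ (sorted_append_replicate _ _ ?_ ?_) ?_
            · simp [List.pairwise_cons] <;> omega
            · intro x hx; simp at hx; omega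
            · intro x hx; simp [List.mem_append, List.mem_replicate] at hx; omega
          · intro x hx; simp [List.mem_append, List.mem_replicate] at hx; omega
          · simp [List.sum_append, List.sum_replicate]; omega
          · rw [transLam_append_replicate, transLam_append_replicate, transLam_quad]
            simp only [List.length_append, List.length_replicate, List.length_cons,
              List.length_nil]
            have hmq : (m:ℚ) = 3*(r:ℚ) + 16 := by exact_mod_cast (by omega : m = 3*r+16)
            rw [hmq]; push_cast; ring
        · -- case E-c : [r+6, r+5, 5, 4] ++ rep r 2, B = r+3
          obtain ⟨r, hr⟩ : ∃ r, B = r+3 := ⟨B-3, by omega⟩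
          subst hr h1
          refine ⟨[r+6, r+5, 5, 4] ++ List.replicate r 2, ⟨?_, ?_, ?_⟩, ?_⟩
          · refine sorted_append_replicate _ _ ?_ ?_
            · simp [List.pairwise_cons] <;> omega
            · intro x hx; simp at hx; omega
          · intro x hx; simp [List.mem_append, List.mem_replicate] at hx; omega
          · simp [List.sum_append, List.sum_replicate]; omega
          · rw [transLam_append_replicate, transLam_quad]
            simp only [List.length_append, List.length_replicate, List.length_cons,
              List.length_nil]
            have hmq : (m:ℚ) = 3*(r:ℚ) + 14 := by exact_mod_cast (by omega : m = 3*r+14)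
            rw [hmq]; push_cast; ring
  · -- n odd
    obtain ⟨hm1, hm2⟩ := hodd ho
    obtain ⟨k, hk⟩ := ho
    obtain ⟨B, S, hn', hm', hB, hS⟩ :
        ∃ B S, n = 2*S+2*B+3 ∧ m = S+2*B+3 ∧ 2 ≤ B ∧ 7 ≤ S :=
      ⟨m - k - 2, n - m, by omega, by omega, by omega, by omega⟩
    by_cases hc1 : B + 3 ≤ S
    · -- case O-a : [B+q+3, B+4] ++ rep B 2 ++ rep q 1, S = B+q+2
      obtain ⟨q, hq, h1⟩ : ∃ q, 1 ≤ q ∧ S = B+q+2 := ⟨S-B-2, by omega, by omega⟩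
      subst h1
      refine ⟨([B+q+3, B+4] ++ List.replicate B 2) ++ List.replicate q 1, ⟨?_, ?_, ?_⟩, ?_⟩
      · refine sorted_append_replicate _ _ (sorted_append_replicate _ _ ?_ ?_) ?_
        · simp [List.pairwise_cons] <;> omega
        · intro x hx; simp at hx; omega
        · intro x hx; simp [List.mem_append, List.mem_replicate] at hx; omega
      · intro x hx; simp [List.mem_append, List.mem_replicate] at hx; omega
      · simp [List.sum_append, List.sum_replicate]; omega
      · rw [transLam_append_replicate, transLam_append_replicate, transLam_pair]
        simp only [List.length_append, List.length_replicate, List.length_cons,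
          List.length_nil]
        have hmq : (m:ℚ) = 3*(B:ℚ) + (q:ℚ) + 5 := by exact_mod_cast (by omega : m = 3*B+q+5)
        rw [hmq]; push_cast; ring
    · by_cases hc2 : S ≤ B
      · -- case O-b : [B+3, S+2] ++ rep (S-1) 2 ++ rep (B-S) 1, S = p+1, B = p+q+1
        obtain ⟨p, q, h1, h2⟩ : ∃ p q, S = p+1 ∧ B = p+q+1 := ⟨S-1, B-S, by omega, by omega⟩
        subst h1 h2
        refine ⟨([p+q+4, p+3] ++ List.replicate p 2) ++ List.replicate q 1, ⟨?_, ?_, ?_⟩, ?_⟩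
        · refine sorted_append_replicate _ _ (sorted_append_replicate _ _ ?_ ?_) ?_
          · simp [List.pairwise_cons] <;> omega
          · intro x hx; simp at hx; omega
          · intro x hx; simp [List.mem_append, List.mem_replicate] at hx; omega
        · intro x hx; simp [List.mem_append, List.mem_replicate] at hx; omega
        · simp [List.sum_append, List.sum_replicate]; omega
        · rw [transLam_append_replicate, transLam_append_replicate, transLam_pair]
          simp only [List.length_append, List.length_replicate, List.length_cons,
            List.length_nil]
          have hmq : (m:ℚ) = 3*(p:ℚ) + 2*(q:ℚ) + 6 := by
            exact_mod_cast (by omega : m = 3*p+2*q+6)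
          rw [hmq]; push_cast; ring
      · have hSB : S = B + 1 ∨ S = B + 2 := by omega
        rcases hSB with h1 | h1
        · -- case O-d : [r+7, r+5, 5, 3] ++ rep r 2 ++ [1], B = r+4
          obtain ⟨r, hr⟩ : ∃ r, B = r+4 := ⟨B-4, by omega⟩
          subst hr h1
          refine ⟨([r+7, r+5, 5, 3] ++ List.replicate r 2) ++ List.replicate 1 1,
            ⟨?_, ?_, ?_⟩, ?_⟩
          · refine sorted_append_replicate _ _ (sorted_append_replicate _ _ ?_ ?_) ?_
            · simp [List.pairwise_cons] <;> omega
            · intro x hx; simp at hx; omega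
            · intro x hx; simp [List.mem_append, List.mem_replicate] at hx; omega
          · intro x hx; simp [List.mem_append, List.mem_replicate] at hx; omega
          · simp [List.sum_append, List.sum_replicate]; omega
          · rw [transLam_append_replicate, transLam_append_replicate, transLam_quad]
            simp only [List.length_append, List.length_replicate, List.length_cons,
              List.length_nil]
            have hmq : (m:ℚ) = 3*(r:ℚ) + 16 := by exact_mod_cast (by omega : m = 3*r+16)
            rw [hmq]; push_cast; ring
        · -- case O-c : [r+6, r+5, 5, 3] ++ rep r 2, B = r+3
          obtain ⟨r, hr⟩ : ∃ r, B = r+3 := ⟨B-3, by omega⟩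
          subst hr h1
          refine ⟨[r+6, r+5, 5, 3] ++ List.replicate r 2, ⟨?_, ?_, ?_⟩, ?_⟩
          · refine sorted_append_replicate _ _ ?_ ?_
            · simp [List.pairwise_cons] <;> omega
            · intro x hx; simp at hx; omega
          · intro x hx; simp [List.mem_append, List.mem_replicate] at hx; omega
          · simp [List.sum_append, List.sum_replicate]; omega
          · rw [transLam_append_replicate, transLam_quad]
            simp only [List.length_append, List.length_replicate, List.length_cons,
              List.length_nil]
            have hmq : (m:ℚ) = 3*(r:ℚ) + 14 := by exact_mod_cast (by omega : m = 3*r+14)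
            rw [hmq]; push_cast; ring
end

section
/- For every integer n ≥ 20 and every integer m with (n+7)/2 ≤ m ≤ n−7 if n is odd, respectively (n+4)/2 ≤ m ≤ n−6 if n is even, there exists a partition p of n such that λ(p) = m, the largest part of p is at most (n + 2)/2, and the number of parts of p is at most (n + 2)/2. -/
set_option maxHeartbeats 2000000


private lemma sum_getD (L : List ℕ) :
    ∑ j ∈ Finset.range L.length, (L.getD j 0 : ℚ) = (L.sum : ℚ) := by
  induction L with
  | nil => simp
  | cons a L ih =>
    rw [List.length_cons, Finset.sum_range_succ']
    simp only [List.getD_cons_succ, List.getD_cons_zero, ih, List.sum_cons]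
    push_cast
    ring

private lemma transLam_cons (a : ℕ) (L : List ℕ) :
    transLam (a :: L) = (a : ℚ) * ((a : ℚ) - 1) / 2 + transLam L - (L.sum : ℚ) := by
  unfold transLam
  rw [List.length_cons, Finset.sum_range_succ']
  have h : ∀ j ∈ Finset.range L.length,
      ((a :: L).getD (j + 1) 0 : ℚ) *
        (((a :: L).getD (j + 1) 0 : ℚ) - 2 * (((j + 1 : ℕ) : ℚ) + 1) + 1)
      = ((L.getD j 0 : ℚ) * ((L.getD j 0 : ℚ) - 2 * ((j : ℚ) + 1) + 1))
          - 2 * (L.getD j 0 : ℚ) := by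
    intro j _
    rw [List.getD_cons_succ]
    push_cast
    ring
  rw [Finset.sum_congr rfl h, Finset.sum_sub_distrib, ← Finset.mul_sum, sum_getD]
  simp only [List.getD_cons_zero]
  push_cast
  ring

private lemma transLam_nil : transLam [] = 0 := by simp [transLam]

private lemma transLam_append (L1 L2 : List ℕ) :
    transLam (L1 ++ L2) = transLam L1 + transLam L2 - (L1.length : ℚ) * (L2.sum : ℚ) := by
  induction L1 with
  | nil => simp [transLam_nil]
  | cons a L ih =>
    rw [List.cons_append, transLam_cons, transLam_cons, ih, List.sum_append, List.length_cons]
    push_cast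
    ring

private lemma transLam_replicate (k v : ℕ) :
    transLam (List.replicate k v) = (k : ℚ) * (v : ℚ) * ((v : ℚ) - (k : ℚ)) / 2 := by
  induction k with
  | zero => simp [transLam_nil]
  | succ k ih =>
    rw [List.replicate_succ, transLam_cons, ih, List.sum_replicate, smul_eq_mul]
    push_cast
    ring

private lemma sorted_rep_append (v k : ℕ) (L : List ℕ) (h : L.Pairwise (· ≥ ·))
    (hL : ∀ x ∈ L, x ≤ v) : (List.replicate k v ++ L).Pairwise (· ≥ ·) := by
  induction k with
  | zero => simpa
  | succ k ih =>
    rw [List.replicate_succ, List.cons_append]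
    refine List.pairwise_cons.2 ⟨?_, ih⟩
    intro b hb
    rcases List.mem_append.1 hb with h' | h'
    · exact (List.eq_of_mem_replicate h').le
    · exact hL b h'

private lemma master (n m x1 x2 v1 s1 v2 s2 u w : ℕ)
    (h12 : x2 ≤ x1) (h2v : v1 ≤ x2) (hvv : v2 ≤ v1) (h2 : 2 ≤ v2)
    (hsum : x1 + x2 + s1 * v1 + s2 * v2 + 2 * u + w = n)
    (hlen : 2 * (2 + s1 + s2 + u + w) ≤ n + 2)
    (hx1 : 2 * x1 ≤ n + 2)
    (hm : 2 * (m : ℚ) = (x1 : ℚ) * ((x1 : ℚ) - 1) + (x2 : ℚ) * ((x2 : ℚ) - 1) - 2 * (x2 : ℚ)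
      + (s1 : ℚ) * (v1 : ℚ) * ((v1 : ℚ) - (s1 : ℚ))
      + (s2 : ℚ) * (v2 : ℚ) * ((v2 : ℚ) - (s2 : ℚ))
      + 2 * (u : ℚ) * (2 - (u : ℚ)) + (w : ℚ) * (1 - (w : ℚ))
      - 2 * (2 * ((s1 : ℚ) * (v1 : ℚ) + (s2 : ℚ) * (v2 : ℚ) + 2 * (u : ℚ) + (w : ℚ))
             + (s1 : ℚ) * ((s2 : ℚ) * (v2 : ℚ) + 2 * (u : ℚ) + (w : ℚ))
             + (s2 : ℚ) * (2 * (u : ℚ) + (w : ℚ)) + (u : ℚ) * (w : ℚ))) :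
    ∃ L : List ℕ, IsPartitionOf n L ∧ transLam L = (m : ℚ) ∧
      (∀ x ∈ L, 2 * x ≤ n + 2) ∧ 2 * L.length ≤ n + 2 := by
  refine ⟨List.replicate 1 x1 ++ (List.replicate 1 x2 ++ (List.replicate s1 v1 ++
    (List.replicate s2 v2 ++ (List.replicate u 2 ++ List.replicate w 1)))), ⟨?_, ?_, ?_⟩, ?_, ?_, ?_⟩
  · -- sorted
    have hrep : ∀ (k v : ℕ), (List.replicate k v).Pairwise (· ≥ ·) := by
      intro k v
      have := sorted_rep_append v k [] (by simp) (by simp)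
      simpa using this
    refine sorted_rep_append _ _ _ ?_ ?_
    · refine sorted_rep_append _ _ _ ?_ ?_
      · refine sorted_rep_append _ _ _ ?_ ?_
        · refine sorted_rep_append _ _ _ ?_ ?_
          · refine sorted_rep_append _ _ _ (hrep _ _) ?_
            intro x hx
            have := List.eq_of_mem_replicate hx
            omega
          · intro x hx
            simp only [List.mem_append, List.mem_replicate] at hx
            omega
        · intro x hx
          simp only [List.mem_append, List.mem_replicate] at hx
          omega
      · intro x hx
        simp only [List.mem_append, List.mem_replicate] at hx
        omega
    · intro x hx
      simp only [List.mem_append, List.mem_replicate] at hx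
      omega
  · -- positive
    intro x hx
    simp only [List.mem_append, List.mem_replicate] at hx
    omega
  · -- sum
    simp only [List.sum_append, List.sum_replicate, smul_eq_mul]
    omega
  · -- transLam
    simp only [transLam_append, transLam_replicate, List.sum_append, List.sum_replicate,
      List.length_append, List.length_replicate, smul_eq_mul]
    push_cast
    linear_combination -hm / 2
  · -- parts bound
    intro x hx
    simp only [List.mem_append, List.mem_replicate] at hx
    omega
  · -- length bound
    simp only [List.length_append, List.length_replicate]
    omega

theorem segment_S2_with_bounds (n : ℕ) (hn : 20 ≤ n) (m : ℕ)
    (hodd : Odd n → n + 7 ≤ 2 * m ∧ m ≤ n - 7)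
    (heven : Even n → n + 4 ≤ 2 * m ∧ m ≤ n - 6) :
    ∃ L : List ℕ, IsPartitionOf n L ∧ transLam L = (m : ℚ) ∧
      (∀ x ∈ L, 2 * x ≤ n + 2) ∧ 2 * L.length ≤ n + 2 := by
  rcases Nat.even_or_odd n with he | ho
  · -- n even
    obtain ⟨hlo, hhi⟩ := heven he
    have hp : n % 2 = 0 := Nat.even_iff.1 he
    rcases (show 2 * m = n + 4 ∨ 2 * m = n + 6 ∨ 2 * m = n + 8 ∨ n + 10 ≤ 2 * m by omega)
      with h | h | h | h
    · rcases (show n % 4 = 2 ∨ n % 4 = 0 by omega) with h4 | h4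
      · obtain ⟨y, hy1, hy2⟩ : ∃ y, n = 4 * y + 6 ∧ m = 2 * y + 5 := ⟨(n - 6) / 4, by omega⟩
        exact master n m (y + 4) (y + 2) 2 0 2 0 y 0 (by omega) (by omega) (by omega) (by omega)
          (by omega) (by omega) (by omega) (by simp only [hy2]; push_cast; ring)
      · obtain ⟨w, hw1, hw2, hw3⟩ : ∃ w, n = 2 * w + 12 ∧ m = w + 8 ∧ 1 ≤ w :=
          ⟨(n - 12) / 2, by omega⟩
        exact master n m (w + 4) 5 3 1 3 0 0 w (by omega) (by omega) (by omega) (by omega)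
          (by omega) (by omega) (by omega) (by simp only [hw2]; push_cast; ring)
    · rcases (show n % 4 = 0 ∨ n % 4 = 2 by omega) with h4 | h4
      · obtain ⟨y, hy1, hy2⟩ : ∃ y, n = 4 * y + 8 ∧ m = 2 * y + 7 := ⟨(n - 8) / 4, by omega⟩
        exact master n m (y + 5) (y + 2) 2 0 2 0 y 1 (by omega) (by omega) (by omega) (by omega)
          (by omega) (by omega) (by omega) (by simp only [hy2]; push_cast; ring)
      · obtain ⟨w, hw1, hw2, hw3⟩ : ∃ w, n = 2 * w + 16 ∧ m = w + 11 ∧ 1 ≤ w :=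
          ⟨(n - 16) / 2, by omega⟩
        exact master n m (w + 5) 6 3 1 3 0 1 w (by omega) (by omega) (by omega) (by omega)
          (by omega) (by omega) (by omega) (by simp only [hw2]; push_cast; ring)
    · rcases (show n % 4 = 2 ∨ n % 4 = 0 by omega) with h4 | h4
      · obtain ⟨y, hy1, hy2⟩ : ∃ y, n = 4 * y + 10 ∧ m = 2 * y + 9 := ⟨(n - 10) / 4, by omega⟩
        exact master n m (y + 6) (y + 2) 2 0 2 0 y 2 (by omega) (by omega) (by omega) (by omega)
          (by omega) (by omega) (by omega) (by simp only [hy2]; push_cast; ring)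
      · by_cases h20 : n = 20
        · have hm14 : m = 14 := by omega
          subst h20; subst hm14
          exact master 20 14 6 5 5 1 4 1 0 0 (by norm_num) (by norm_num) (by norm_num)
            (by norm_num) (by norm_num) (by norm_num) (by norm_num) (by norm_num)
        · obtain ⟨w, hw1, hw2, hw3⟩ : ∃ w, n = 2 * w + 20 ∧ m = w + 14 ∧ 1 ≤ w :=
            ⟨(n - 20) / 2, by omega⟩
          exact master n m (w + 6) 7 3 1 3 0 2 w (by omega) (by omega) (by omega) (by omega)
            (by omega) (by omega) (by omega) (by simp only [hw2]; push_cast; ring)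
    · -- main even family
      obtain ⟨c, u, w, hn', hm'⟩ : ∃ c u w, n = 6 * c + 4 * u + 2 * w + 12 ∧
          m = 3 * c + 3 * u + 2 * w + 9 :=
        ⟨(n - 3 - m) / 3, n - m - 3 * ((n - 3 - m) / 3) - 3,
          2 * m + 3 * ((n - 3 - m) / 3) + 3 - 3 * ((n + 2) / 2), by omega⟩
      exact master n m (c + u + w + 5) (c + u + 4) (c + 3) 1 3 c u w (by omega) (by omega)
        (by omega) (by omega) (by omega) (by omega) (by omega)
        (by simp only [hm']; push_cast; ring)
  · -- n odd
    obtain ⟨hlo, hhi⟩ := hodd ho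
    have hp : n % 2 = 1 := Nat.odd_iff.1 ho
    by_cases hW : 4 * m + 9 < 3 * n ∧ ¬(5 * ((3 * n + 14 - 4 * m) / 12) + 2 ≤ n - m)
    · obtain ⟨hc, hnW⟩ := hW
      have hex : (n = 25 ∧ m = 16) ∨ (n = 27 ∧ m = 17) ∨ (n = 29 ∧ m = 18) ∨
          (n = 29 ∧ m = 19) ∨ (n = 31 ∧ m = 20) ∨ (n = 33 ∧ m = 22) ∨ (n = 37 ∧ m = 22) ∨
          (n = 39 ∧ m = 23) ∨ (n = 41 ∧ m = 25) ∨ (n = 49 ∧ m = 28) := by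
        have h1 : n ≤ 49 := by omega
        clear ho
        interval_cases n <;> interval_cases m <;> omega
      clear hc hnW hn hlo hhi hp ho
      rcases hex with ⟨h1, h2⟩ | ⟨h1, h2⟩ | ⟨h1, h2⟩ | ⟨h1, h2⟩ | ⟨h1, h2⟩ | ⟨h1, h2⟩ |
        ⟨h1, h2⟩ | ⟨h1, h2⟩ | ⟨h1, h2⟩ | ⟨h1, h2⟩ <;> subst h1 <;> subst h2
      · exact master 25 16 7 6 5 2 2 0 0 2 (by norm_num) (by norm_num) (by norm_num)
          (by norm_num) (by norm_num) (by norm_num) (by norm_num) (by norm_num)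
      · exact master 27 17 7 6 6 1 4 2 0 0 (by norm_num) (by norm_num) (by norm_num)
          (by norm_num) (by norm_num) (by norm_num) (by norm_num) (by norm_num)
      · exact master 29 18 7 6 6 1 5 2 0 0 (by norm_num) (by norm_num) (by norm_num)
          (by norm_num) (by norm_num) (by norm_num) (by norm_num) (by norm_num)
      · exact master 29 19 8 6 6 1 4 2 0 1 (by norm_num) (by norm_num) (by norm_num)
          (by norm_num) (by norm_num) (by norm_num) (by norm_num) (by norm_num)
      · exact master 31 20 7 7 6 2 4 1 0 1 (by norm_num) (by norm_num) (by norm_num)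
          (by norm_num) (by norm_num) (by norm_num) (by norm_num) (by norm_num)
      · exact master 33 22 7 7 7 2 3 1 0 2 (by norm_num) (by norm_num) (by norm_num)
          (by norm_num) (by norm_num) (by norm_num) (by norm_num) (by norm_num)
      · exact master 37 22 8 7 7 1 6 2 1 1 (by norm_num) (by norm_num) (by norm_num)
          (by norm_num) (by norm_num) (by norm_num) (by norm_num) (by norm_num)
      · exact master 39 23 8 8 7 1 6 2 2 0 (by norm_num) (by norm_num) (by norm_num)
          (by norm_num) (by norm_num) (by norm_num) (by norm_num) (by norm_num)
      · exact master 41 25 8 7 7 2 6 2 0 0 (by norm_num) (by norm_num) (by norm_num)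
          (by norm_num) (by norm_num) (by norm_num) (by norm_num) (by norm_num)
      · exact master 49 28 9 8 8 3 3 2 1 0 (by norm_num) (by norm_num) (by norm_num)
          (by norm_num) (by norm_num) (by norm_num) (by norm_num) (by norm_num)
    · -- main odd family
      obtain ⟨d, u, w, hn', hm'⟩ : ∃ d u w, n = 8 * d + 4 * u + 2 * w + 19 ∧
          m = 3 * d + 3 * u + 2 * w + 12 := by
        rcases (show 3 * n ≤ 4 * m + 9 ∨ 4 * m + 9 < 3 * n from by omega) with hc | hc
        · exact ⟨0, n - m - 7, 2 * m - 3 * ((n - 5) / 2) - 3, by omega⟩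
        · have hB : 5 * ((3 * n + 14 - 4 * m) / 12) + 2 ≤ n - m := by
            by_contra hB
            exact hW ⟨hc, hB⟩
          exact ⟨(3 * n + 14 - 4 * m) / 12 - 1,
            n - m - 5 * ((3 * n + 14 - 4 * m) / 12) - 2,
            2 * m + 6 * ((3 * n + 14 - 4 * m) / 12) - 3 * ((n - 5) / 2) - 9, by omega⟩
      exact master n m (d + u + w + 6) (d + u + 5) (d + 4) 2 4 d u w (by omega) (by omega)
        (by omega) (by omega) (by omega) (by omega) (by omega)
        (by simp only [hm']; push_cast; ring)
end

section
/- For every integer n ≥ 31: if n is odd, then for each m ∈ {(n+1)/2, (n+3)/2, (n+5)/2} there exists a partition p of n with λ(p) = m; if n is even, then for each m ∈ {(n−2)/2, n/2, (n+2)/2} there exists a partition p of n with λ(p) = m. -/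
lemma transLam_concat (G : List ℕ) (x : ℕ) :
    transLam (G ++ [x]) =
      transLam G + (x : ℚ) * ((x : ℚ) - 2 * ((G.length : ℚ) + 1) + 1) / 2 := by
  unfold transLam
  rw [List.length_append, List.length_singleton, Finset.sum_range_succ]
  rw [List.getD_append_right _ _ _ _ (le_refl G.length), Nat.sub_self]
  have hsum : ∀ j ∈ Finset.range G.length,
      ((G ++ [x]).getD j 0 : ℚ) * (((G ++ [x]).getD j 0 : ℚ) - 2 * ((j : ℚ) + 1) + 1)
        = (G.getD j 0 : ℚ) * ((G.getD j 0 : ℚ) - 2 * ((j : ℚ) + 1) + 1) := by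
    intro j hj
    rw [List.getD_append _ _ _ _ (Finset.mem_range.1 hj)]
  rw [Finset.sum_congr rfl hsum]
  simp [add_div]

lemma transLam_ones (F : List ℕ) (t : ℕ) :
    transLam (F ++ List.replicate t 1) =
      transLam F - (t : ℚ) * (2 * (F.length : ℚ) + (t : ℚ) - 1) / 2 := by
  induction t with
  | zero => simp
  | succ t ih =>
    have h : F ++ List.replicate (t + 1) 1 = (F ++ List.replicate t 1) ++ [1] := by
      rw [List.replicate_succ', List.append_assoc]
    rw [h, transLam_concat, ih]
    rw [List.length_append, List.length_replicate]
    push_cast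
    ring

lemma pairwise_rep_one (t : ℕ) : (List.replicate t 1).Pairwise (fun x y : ℕ => x ≥ y) := by
  induction t with
  | zero => simp
  | succ t ih =>
    rw [List.replicate_succ]
    exact List.Pairwise.cons (fun y hy => by rw [List.eq_of_mem_replicate hy]) ih

lemma part_ones (F : List ℕ) (t n : ℕ) (hF : F.Pairwise (· ≥ ·)) (h1 : ∀ x ∈ F, 1 ≤ x)
    (hsum : F.sum + t = n) : IsPartitionOf n (F ++ List.replicate t 1) := by
  refine ⟨?_, ?_, ?_⟩
  · refine List.pairwise_append.2 ⟨hF, pairwise_rep_one t, ?_⟩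
    intro x hx y hy
    rw [List.eq_of_mem_replicate hy]
    exact h1 x hx
  · intro x hx
    rcases List.mem_append.1 hx with h | h
    · exact h1 x h
    · rw [List.eq_of_mem_replicate h]; norm_num
  · rw [List.sum_append, List.sum_replicate, smul_eq_mul, mul_one, hsum]

theorem set_A1_in_spectrum (n : ℕ) (hn : 31 ≤ n) (m : ℕ)
    (h : (Odd n ∧ (2 * m = n + 1 ∨ 2 * m = n + 3 ∨ 2 * m = n + 5)) ∨
         (Even n ∧ (2 * m = n - 2 ∨ 2 * m = n ∨ 2 * m = n + 2))) :
    ∃ L : List ℕ, IsPartitionOf n L ∧ transLam L = (m : ℚ) := by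
  rcases h with ⟨hodd, hm⟩ | ⟨heven, hm⟩
  · obtain ⟨k, hk⟩ := hodd
    obtain ⟨r, rfl⟩ : ∃ r, n = 2 * r + 31 := ⟨k - 15, by omega⟩
    rcases hm with h1 | h3 | h5
    · obtain rfl : m = r + 16 := by omega
      refine ⟨[r + 10, 7, 4, 3, 3] ++ List.replicate (r + 4) 1, ?_, ?_⟩
      · refine part_ones _ _ _ ?_ ?_ ?_
        · simp [List.pairwise_cons] <;> omega
        · intro x hx; simp at hx; omega
        · simp; omega
      · rw [transLam_ones]
        simp only [transLam, List.length_cons, List.length_nil, Finset.sum_range_succ,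
          Finset.sum_range_zero, List.getD_cons_zero, List.getD_cons_succ]
        push_cast
        ring
    · obtain rfl : m = r + 17 := by omega
      refine ⟨[r + 15, 4] ++ List.replicate (r + 12) 1, ?_, ?_⟩
      · refine part_ones _ _ _ ?_ ?_ ?_
        · simp [List.pairwise_cons] <;> omega
        · intro x hx; simp at hx; omega
        · simp; omega
      · rw [transLam_ones]
        simp only [transLam, List.length_cons, List.length_nil, Finset.sum_range_succ,
          Finset.sum_range_zero, List.getD_cons_zero, List.getD_cons_succ]
        push_cast
        ring
    · obtain rfl : m = r + 18 := by omega
      refine ⟨[r + 14, 5, 2] ++ List.replicate (r + 10) 1, ?_, ?_⟩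
      · refine part_ones _ _ _ ?_ ?_ ?_
        · simp [List.pairwise_cons] <;> omega
        · intro x hx; simp at hx; omega
        · simp; omega
      · rw [transLam_ones]
        simp only [transLam, List.length_cons, List.length_nil, Finset.sum_range_succ,
          Finset.sum_range_zero, List.getD_cons_zero, List.getD_cons_succ]
        push_cast
        ring
  · obtain ⟨k, hk⟩ := heven
    obtain ⟨r, rfl⟩ : ∃ r, n = 2 * r + 32 := ⟨k - 16, by omega⟩
    rcases hm with h1 | h0 | h2
    · obtain rfl : m = r + 15 := by omega
      refine ⟨[r + 8, 8, 5, 4, 3, 3] ++ List.replicate (r + 1) 1, ?_, ?_⟩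
      · refine part_ones _ _ _ ?_ ?_ ?_
        · simp [List.pairwise_cons] <;> omega
        · intro x hx; simp at hx; omega
        · simp; omega
      · rw [transLam_ones]
        simp only [transLam, List.length_cons, List.length_nil, Finset.sum_range_succ,
          Finset.sum_range_zero, List.getD_cons_zero, List.getD_cons_succ]
        push_cast
        ring
    · obtain rfl : m = r + 16 := by omega
      refine ⟨[r + 17] ++ List.replicate (r + 15) 1, ?_, ?_⟩
      · refine part_ones _ _ _ ?_ ?_ ?_
        · simp [List.pairwise_cons]
        · intro x hx; simp at hx; omega
        · simp; omega
      · rw [transLam_ones]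
        simp only [transLam, List.length_cons, List.length_nil, Finset.sum_range_succ,
          Finset.sum_range_zero, List.getD_cons_zero, List.getD_cons_succ]
        push_cast
        ring
    · obtain rfl : m = r + 17 := by omega
      refine ⟨[r + 10, 8, 3, 3, 3, 2] ++ List.replicate (r + 3) 1, ?_, ?_⟩
      · refine part_ones _ _ _ ?_ ?_ ?_
        · simp [List.pairwise_cons] <;> omega
        · intro x hx; simp at hx; omega
        · simp; omega
      · rw [transLam_ones]
        simp only [transLam, List.length_cons, List.length_nil, Finset.sum_range_succ,
          Finset.sum_range_zero, List.getD_cons_zero, List.getD_cons_succ]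
        push_cast
        ring
end
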